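/- Let λ ∈ ℝ, ρ ∈ (0,∞), and let a : [λ−ρ, λ+ρ] → ℝ be measurable with a(λ) finite such that |a(λ+t) − a(λ)| ≤ ω(|t|) for all 0 < |t| ≤ ρ, where ω : (0,ρ] → [0,∞) and t ↦ ω(t)/t is integrable over (0,ρ). Then for every ε > 0 and each choice of sign, | ∫_{λ−ρ}^{λ+ρ} a(τ)/(τ−λ ∓ iε) dτ | ≤ 2π ( ∫_0^ρ ω(t)/t dt + |a(λ)| ). -/

import Mathlib

open MeasureTheory

set_option maxHeartbeats 1000000

/-- Let `λ ∈ ℝ`, `ρ ∈ (0,∞)`, and let `a` be measurable with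
`|a(λ+t) − a(λ)| ≤ ω(|t|)` for all `0 < |t| ≤ ρ`, where `t ↦ ω(t)/t` is integrable over `(0,ρ)`.
Then for every `ε > 0` and each choice of sign `s = ±1`,
`| ∫_{λ−ρ}^{λ+ρ} a(τ)/(τ−λ − s i ε) dτ | ≤ 2π ( ∫_0^ρ ω(t)/t dt + |a(λ)| )`. -/
theorem stmt1 (lam ρ : ℝ) (hρ : 0 < ρ)
    (a : ℝ → ℝ) (ha : Measurable a)
    (ω : ℝ → ℝ) (hω0 : ∀ t ∈ Set.Ioc (0:ℝ) ρ, 0 ≤ ω t)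
    (hωint : IntegrableOn (fun t => ω t / t) (Set.Ioc (0:ℝ) ρ))
    (hbound : ∀ t : ℝ, 0 < |t| → |t| ≤ ρ → |a (lam + t) - a lam| ≤ ω |t|) :
    ∀ ε : ℝ, 0 < ε → ∀ s : ℝ, s = 1 ∨ s = -1 →
      ‖∫ τ in (lam - ρ)..(lam + ρ), (a τ : ℂ) / ((τ : ℂ) - lam - s * ε * Complex.I)‖
        ≤ 2 * Real.pi * ((∫ t in Set.Ioc (0:ℝ) ρ, ω t / t) + |a lam|) := by
  intro ε hε s hs
  have hs1 : |s| = 1 := by rcases hs with h | h <;> simp [h]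
  set c : ℂ := (s : ℂ) * (ε : ℂ) * Complex.I with hc
  -- basic facts about the denominator
  have hre : ∀ t : ℝ, ((t : ℂ) - c).re = t := by intro t; simp [hc]
  have him : ∀ t : ℝ, ((t : ℂ) - c).im = -(s * ε) := by intro t; simp [hc]
  have hd1 : ∀ t : ℝ, |t| ≤ ‖(t : ℂ) - c‖ := by
    intro t
    have h := Complex.abs_re_le_norm ((t : ℂ) - c)
    rw [hre t] at h
    exact h
  have hd2 : ∀ t : ℝ, ε ≤ ‖(t : ℂ) - c‖ := by
    intro t
    have := Complex.abs_im_le_norm ((t : ℂ) - c)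
    rw [him] at this
    calc ε = |(-(s * ε))| := by rw [abs_neg, abs_mul, hs1, one_mul, abs_of_pos hε]
    _ ≤ _ := this
  have hd0 : ∀ t : ℝ, (t : ℂ) - c ≠ 0 := by
    intro t h
    have h2 := hd2 t
    rw [h] at h2; simp at h2; linarith
  -- shift the variable
  have hshift : (∫ τ in (lam - ρ)..(lam + ρ), (a τ : ℂ) / ((τ : ℂ) - lam - c))
      = ∫ t in (-ρ)..ρ, (a (lam + t) : ℂ) / ((t : ℂ) - c) := by
    have h := intervalIntegral.integral_comp_add_right
      (fun τ => (a τ : ℂ) / ((τ : ℂ) - lam - c)) lam (a := -ρ) (b := ρ)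
    rw [show -ρ + lam = lam - ρ by ring, show ρ + lam = lam + ρ by ring] at h
    rw [← h]
    congr 1
    funext t
    rw [add_comm t lam]
    push_cast
    ring_nf
  rw [hshift]
  set F : ℝ → ℂ := fun t => ((a (lam + t) : ℂ) - (a lam : ℂ)) / ((t : ℂ) - c) with hF
  set G : ℝ → ℂ := fun t => (a lam : ℂ) / ((t : ℂ) - c) with hG
  set g : ℝ → ℝ := fun t => ω |t| / |t| with hgdef
  -- integrability of g
  have hg_half : IntegrableOn g (Set.Ioc 0 ρ) := by
    apply hωint.congr_fun _ measurableSet_Ioc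
    intro t ht
    simp [hgdef, abs_of_pos ht.1]
  have hg_int_right : IntervalIntegrable g volume 0 ρ :=
    (intervalIntegrable_iff_integrableOn_Ioc_of_le hρ.le).mpr hg_half
  have geven : ∀ t : ℝ, g (-t) = g t := by intro t; simp [hgdef]
  have hg_int_left : IntervalIntegrable g volume (-ρ) 0 := by
    have h := ((IntervalIntegrable.iff_comp_neg (f := g)).mp hg_int_right)
    simp only [geven, neg_zero] at h
    exact h.symm
  have hg_int : IntervalIntegrable g volume (-ρ) ρ := hg_int_left.trans hg_int_right
  -- pointwise bound on F
  have hFle : ∀ t ∈ Set.uIoc (-ρ) ρ, ‖F t‖ ≤ g t := by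
    intro t ht
    rw [Set.uIoc_of_le (by linarith)] at ht
    have htρ : |t| ≤ ρ := abs_le.mpr ⟨ht.1.le, ht.2⟩
    rcases eq_or_ne t 0 with rfl | htne
    · simp [hF, hgdef]
    · have htpos : 0 < |t| := abs_pos.mpr htne
      have h1 : ‖F t‖ = |a (lam + t) - a lam| / ‖(t : ℂ) - c‖ := by
        rw [hF]
        simp only [norm_div]
        congr 1
        rw [← Complex.ofReal_sub, Complex.norm_real, Real.norm_eq_abs]
      rw [h1, hgdef]
      exact div_le_div₀ (hω0 _ ⟨htpos, htρ⟩) (hbound t htpos htρ) htpos (hd1 t)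
  -- integrability of F and G
  have hFmeas : AEStronglyMeasurable F (volume.restrict (Set.uIoc (-ρ) ρ)) := by
    apply Measurable.aestronglyMeasurable
    apply Measurable.div
    · exact (Complex.measurable_ofReal.comp (ha.comp (measurable_const_add lam))).sub
        measurable_const
    · exact (Complex.measurable_ofReal.sub measurable_const)
  have hF_int : IntervalIntegrable F volume (-ρ) ρ := by
    rw [intervalIntegrable_iff] at hg_int ⊢
    apply hg_int.mono' hFmeas
    exact (ae_restrict_mem measurableSet_uIoc).mono fun t ht => hFle t ht
  have hGcont : Continuous G := by
    apply continuous_const.div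
    · exact Complex.continuous_ofReal.sub continuous_const
    · exact hd0
  have hG_int : IntervalIntegrable G volume (-ρ) ρ := hGcont.intervalIntegrable _ _
  -- split the integral
  have hsplit : (∫ t in (-ρ)..ρ, (a (lam + t) : ℂ) / ((t : ℂ) - c))
      = (∫ t in (-ρ)..ρ, F t) + ∫ t in (-ρ)..ρ, G t := by
    rw [← intervalIntegral.integral_add hF_int hG_int]
    congr 1
    funext t
    rw [hF, hG]
    simp only
    rw [← add_div, sub_add_cancel]
  rw [hsplit]
  -- bound for the F part
  have hIoc_nonneg : 0 ≤ ∫ t in Set.Ioc (0:ℝ) ρ, ω t / t := by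
    apply setIntegral_nonneg measurableSet_Ioc
    intro t ht
    exact div_nonneg (hω0 t ht) ht.1.le
  have hFbound : ‖∫ t in (-ρ)..ρ, F t‖ ≤ 2 * ∫ t in Set.Ioc (0:ℝ) ρ, ω t / t := by
    have h1 : ‖∫ t in (-ρ)..ρ, F t‖ ≤ |∫ t in (-ρ)..ρ, g t| := by
      apply intervalIntegral.norm_integral_le_abs_of_norm_le _ hg_int
      exact (ae_restrict_mem measurableSet_uIoc).mono fun t ht => hFle t ht
    have h2 : (∫ t in (0:ℝ)..ρ, g t) = ∫ t in Set.Ioc (0:ℝ) ρ, ω t / t := by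
      rw [intervalIntegral.integral_of_le hρ.le]
      apply setIntegral_congr_fun measurableSet_Ioc
      intro t ht
      simp [hgdef, abs_of_pos ht.1]
    have h3 : (∫ t in (-ρ)..(0:ℝ), g t) = ∫ t in (0:ℝ)..ρ, g t := by
      have h := intervalIntegral.integral_comp_neg g (a := 0) (b := ρ)
      simp only [geven, neg_zero] at h
      rw [← h]
    have h4 : (∫ t in (-ρ)..ρ, g t)
        = (∫ t in (-ρ)..(0:ℝ), g t) + ∫ t in (0:ℝ)..ρ, g t :=
      (intervalIntegral.integral_add_adjacent_intervals hg_int_left hg_int_right).symm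
    rw [h4, h3, h2] at h1
    calc ‖∫ t in (-ρ)..ρ, F t‖ ≤ _ := h1
    _ = 2 * ∫ t in Set.Ioc (0:ℝ) ρ, ω t / t := by
        rw [abs_of_nonneg (by linarith)]; ring
  -- bound for the G part
  have hGbound : ‖∫ t in (-ρ)..ρ, G t‖ ≤ Real.pi * |a lam| := by
    set P : ℝ → ℝ := fun t => t / (t ^ 2 + ε ^ 2) with hP
    set Q : ℝ → ℝ := fun t => 1 / (t ^ 2 + ε ^ 2) with hQ
    have hs2 : (s : ℂ) ^ 2 = 1 := by
      rcases hs with h | h <;> rw [h] <;> norm_num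
    have hε2 : ∀ t : ℝ, t ^ 2 + ε ^ 2 ≠ 0 := fun t => by positivity
    have hden : ∀ t : ℝ, ((t : ℂ) ^ 2 + (ε : ℂ) ^ 2) ≠ 0 := by
      intro t h
      apply hε2 t
      have h2 : ((t ^ 2 + ε ^ 2 : ℝ) : ℂ) = 0 := by push_cast; exact h
      exact_mod_cast h2
    have hinv : ∀ t : ℝ, ((t : ℂ) - c)⁻¹ = (P t : ℂ) + c * (Q t : ℂ) := by
      intro t
      have hmul : ((t : ℂ) - c) * ((t : ℂ) + c) = (t : ℂ) ^ 2 + (ε : ℂ) ^ 2 := by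
        rw [hc]
        linear_combination (-(s:ℂ)^2*(ε:ℂ)^2) * Complex.I_sq + (ε:ℂ)^2 * hs2
      have hPQ : (P t : ℂ) + c * (Q t : ℂ)
          = ((t : ℂ) + c) / ((t : ℂ) ^ 2 + (ε : ℂ) ^ 2) := by
        rw [hP, hQ]
        push_cast
        field_simp
      apply inv_eq_of_mul_eq_one_right
      rw [hPQ, mul_div_assoc', hmul, div_self (hden t)]
    have hPcont : Continuous P := by
      exact continuous_id.div ((continuous_pow 2).add continuous_const) hε2
    have hQcont : Continuous Q := by
      exact continuous_const.div ((continuous_pow 2).add continuous_const) hε2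
    -- compute the integrals
    have hPzero : (∫ t in (-ρ)..ρ, P t) = 0 := by
      have h := intervalIntegral.integral_comp_neg P (a := -ρ) (b := ρ)
      rw [neg_neg] at h
      have hodd : ∀ t : ℝ, P (-t) = -P t := by
        intro t; rw [hP]; simp only; rw [neg_pow]; ring_nf
      simp only [hodd, intervalIntegral.integral_neg] at h
      linarith
    have hQval : (∫ t in (-ρ)..ρ, Q t) = (2 / ε) * Real.arctan (ρ / ε) := by
      have hQeq : ∀ t : ℝ, Q t = (1 / ε ^ 2) * (1 / (1 + (t / ε) ^ 2)) := by
        intro t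
        rw [hQ]
        have h1 : (1 + (t / ε) ^ 2) = (t ^ 2 + ε ^ 2) / ε ^ 2 := by
          field_simp; ring
        rw [h1]
        field_simp
      simp only [hQeq]
      rw [intervalIntegral.integral_const_mul]
      rw [intervalIntegral.integral_comp_div (fun u => 1 / (1 + u ^ 2)) hε.ne']
      rw [integral_one_div_one_add_sq, smul_eq_mul, neg_div, Real.arctan_neg]
      field_simp
      ring
    have hintG : (∫ t in (-ρ)..ρ, G t)
        = (a lam : ℂ) * (((∫ t in (-ρ)..ρ, P t : ℝ) : ℂ)
            + c * ((∫ t in (-ρ)..ρ, Q t : ℝ) : ℂ)) := by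
      have e1 : (∫ t in (-ρ)..ρ, G t)
          = ∫ t in (-ρ)..ρ, (a lam : ℂ) * ((P t : ℂ) + c * (Q t : ℂ)) := by
        congr 1
        funext t
        rw [hG]
        simp only
        rw [div_eq_mul_inv, hinv t]
      rw [e1, intervalIntegral.integral_const_mul]
      congr 1
      have iP : IntervalIntegrable (fun t : ℝ => ((P t : ℂ))) volume (-ρ) ρ :=
        (Complex.continuous_ofReal.comp hPcont).intervalIntegrable _ _
      have iQ : IntervalIntegrable (fun t : ℝ => c * (Q t : ℂ)) volume (-ρ) ρ :=
        (continuous_const.mul (Complex.continuous_ofReal.comp hQcont)).intervalIntegrable _ _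
      rw [intervalIntegral.integral_add iP iQ, intervalIntegral.integral_const_mul]
      rw [intervalIntegral.integral_ofReal, intervalIntegral.integral_ofReal]
    rw [hintG, hPzero]
    have hnc : ‖c‖ = ε := by
      rw [hc]
      simp [abs_of_pos hε, hs1, map_mul]
    rw [hQval]
    have harct : 0 ≤ Real.arctan (ρ / ε) := by
      rw [← Real.arctan_zero]
      exact Real.arctan_strictMono.monotone (by positivity)
    have harctlt : Real.arctan (ρ / ε) < Real.pi / 2 := Real.arctan_lt_pi_div_two _
    have : ‖(a lam : ℂ) * (((0:ℝ):ℂ) + c * (((2 / ε) * Real.arctan (ρ / ε) : ℝ) : ℂ))‖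
        = |a lam| * (ε * ((2 / ε) * Real.arctan (ρ / ε))) := by
      rw [norm_mul, Complex.norm_real, Real.norm_eq_abs]
      congr 1
      rw [Complex.ofReal_zero, zero_add, norm_mul, hnc, Complex.norm_real,
        Real.norm_eq_abs, abs_of_nonneg (by positivity)]
    rw [this]
    have hε' : ε ≠ 0 := hε.ne'
    have : ε * ((2 / ε) * Real.arctan (ρ / ε)) = 2 * Real.arctan (ρ / ε) := by
      field_simp
    rw [this]
    have : 2 * Real.arctan (ρ / ε) ≤ Real.pi := by linarith
    calc |a lam| * (2 * Real.arctan (ρ / ε)) ≤ |a lam| * Real.pi :=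
          mul_le_mul_of_nonneg_left this (abs_nonneg _)
    _ = Real.pi * |a lam| := by ring
  calc ‖(∫ t in (-ρ)..ρ, F t) + ∫ t in (-ρ)..ρ, G t‖
      ≤ ‖∫ t in (-ρ)..ρ, F t‖ + ‖∫ t in (-ρ)..ρ, G t‖ := norm_add_le _ _
  _ ≤ 2 * (∫ t in Set.Ioc (0:ℝ) ρ, ω t / t) + Real.pi * |a lam| :=
      add_le_add hFbound hGbound
  _ ≤ 2 * Real.pi * ((∫ t in Set.Ioc (0:ℝ) ρ, ω t / t) + |a lam|) := by
      nlinarith [Real.two_le_pi, hIoc_nonneg, abs_nonneg (a lam)]
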